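/- arXiv:2302.00132 — 2 statements merged into one kernel-verified Lean document; each statement's English description precedes it below -/
import Mathlib

section
/- Let Ω_r^+ = {(x', xₙ) : |x'| < r, ψ(x') < xₙ < ψ(x') + (M+1)r} be a special Lipschitz domain over a Lipschitz function ψ with constant ≤ M and ψ(0)=0, let Ψ(x',xₙ) = (x', 2ψ(x') − xₙ), and let Ω_r be the union of Ω_r^+ with its reflection Ω_r^− = Ψ(Ω_r^+) and the graph piece between them. For u ∈ L¹(Ω_r^+), define ũ = u on Ω_r^+ and ũ = u ∘ Ψ on Ω_r^−. Then for r' < r/(3(M+1)), the average of |ũ| over B_{r'}(0) is bounded by C times the average of |u| over B_{3(M+1)r'}(0) ∩ Ω_r^+, where C depends only on n and M. -/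
open MeasureTheory Real NNReal

/-- The first `m` coordinates of a point of `ℝ^{m+1}`. -/
noncomputable def initPart (m : ℕ) (x : EuclideanSpace ℝ (Fin (m + 1))) :
    EuclideanSpace ℝ (Fin m) :=
  WithLp.toLp 2 (fun i : Fin m => x i.castSucc)

/-- Reflection across the graph of `ψ`: `Ψ(x', xₙ) = (x', 2ψ(x') − xₙ)`. -/
noncomputable def reflMap (m : ℕ) (ψ : EuclideanSpace ℝ (Fin m) → ℝ) :
    EuclideanSpace ℝ (Fin (m + 1)) → EuclideanSpace ℝ (Fin (m + 1)) :=
  fun x => WithLp.toLp 2 (Fin.snoc (initPart m x).ofLp (2 * ψ (initPart m x) - x (Fin.last m)) :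
    Fin (m + 1) → ℝ)

/-- The special Lipschitz domain
`Ω_r^+ = {(x', xₙ) : |x'| < r, ψ(x') < xₙ < ψ(x') + (M+1) r}`. -/
def specialDomain (m : ℕ) (M : ℝ) (ψ : EuclideanSpace ℝ (Fin m) → ℝ) (r : ℝ) :
    Set (EuclideanSpace ℝ (Fin (m + 1))) :=
  {x | ‖initPart m x‖ < r ∧ ψ (initPart m x) < x (Fin.last m) ∧
    x (Fin.last m) < ψ (initPart m x) + (M + 1) * r}

/-- The even reflection `ũ` of `u` across the graph of `ψ`:
`ũ = u` above the graph, `ũ = u ∘ Ψ` below it. -/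
noncomputable def reflExt (m : ℕ) (ψ : EuclideanSpace ℝ (Fin m) → ℝ)
    (u : EuclideanSpace ℝ (Fin (m + 1)) → ℝ) :
    EuclideanSpace ℝ (Fin (m + 1)) → ℝ :=
  fun x => if ψ (initPart m x) ≤ x (Fin.last m) then u x else u (reflMap m ψ x)

lemma norm_eq_aux (m : ℕ) (x : EuclideanSpace ℝ (Fin (m + 1))) :
    ‖x‖ = Real.sqrt (‖initPart m x‖ ^ 2 + (x (Fin.last m)) ^ 2) := by
  rw [EuclideanSpace.norm_eq, EuclideanSpace.norm_eq,
    Real.sq_sqrt (by positivity), Fin.sum_univ_castSucc]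
  simp [Real.norm_eq_abs, sq_abs, initPart]

lemma norm_initPart_le (m : ℕ) (x : EuclideanSpace ℝ (Fin (m + 1))) :
    ‖initPart m x‖ ≤ ‖x‖ := by
  rw [norm_eq_aux]
  refine le_trans ?_ (Real.sqrt_le_sqrt (by nlinarith [sq_nonneg (x (Fin.last m))]
    : ‖initPart m x‖ ^ 2 ≤ ‖initPart m x‖ ^ 2 + (x (Fin.last m)) ^ 2))
  rw [Real.sqrt_sq (norm_nonneg _)]

lemma abs_last_le (m : ℕ) (x : EuclideanSpace ℝ (Fin (m + 1))) :
    |x (Fin.last m)| ≤ ‖x‖ := by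
  rw [norm_eq_aux, ← Real.sqrt_sq_eq_abs]
  exact Real.sqrt_le_sqrt (by nlinarith [sq_nonneg ‖initPart m x‖])

lemma initPart_reflMap (m : ℕ) (ψ : EuclideanSpace ℝ (Fin m) → ℝ)
    (x : EuclideanSpace ℝ (Fin (m + 1))) :
    initPart m (reflMap m ψ x) = initPart m x := by
  ext i
  show (reflMap m ψ x) i.castSucc = x i.castSucc
  simp [reflMap, Fin.snoc_castSucc]
  rfl

lemma last_reflMap (m : ℕ) (ψ : EuclideanSpace ℝ (Fin m) → ℝ)
    (x : EuclideanSpace ℝ (Fin (m + 1))) :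
    reflMap m ψ x (Fin.last m) = 2 * ψ (initPart m x) - x (Fin.last m) := by
  simp [reflMap, Fin.snoc_last]

lemma norm_reflMap_le (m : ℕ) (ψ : EuclideanSpace ℝ (Fin m) → ℝ)
    (x : EuclideanSpace ℝ (Fin (m + 1))) :
    ‖reflMap m ψ x‖ ≤ ‖initPart m x‖ + |2 * ψ (initPart m x) - x (Fin.last m)| := by
  rw [norm_eq_aux m (reflMap m ψ x), initPart_reflMap, last_reflMap]
  set a := ‖initPart m x‖
  set b := |2 * ψ (initPart m x) - x (Fin.last m)|
  have ha : 0 ≤ a := norm_nonneg _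
  have hb : 0 ≤ b := abs_nonneg _
  have : Real.sqrt (a ^ 2 + (2 * ψ (initPart m x) - x (Fin.last m)) ^ 2)
      ≤ Real.sqrt ((a + b) ^ 2) := by
    apply Real.sqrt_le_sqrt
    nlinarith [sq_abs (2 * ψ (initPart m x) - x (Fin.last m))]
  simpa [Real.sqrt_sq (by positivity : (0:ℝ) ≤ a + b)] using this

section MP
variable (m : ℕ)

noncomputable def eqvE (m : ℕ) :
    EuclideanSpace ℝ (Fin (m + 1)) ≃ᵐ ℝ × (Fin m → ℝ) :=
  (MeasurableEquiv.toLp 2 (Fin (m + 1) → ℝ)).symm.trans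
    (MeasurableEquiv.piFinSuccAbove (fun _ : Fin (m + 1) => ℝ) (Fin.last m))

lemma eqvE_measurePreserving : MeasurePreserving (eqvE m) volume volume :=
  (volume_preserving_piFinSuccAbove (fun _ : Fin (m + 1) => ℝ) (Fin.last m)).comp
    (EuclideanSpace.volume_preserving_symm_measurableEquiv_toLp (Fin (m + 1)))

lemma eqvE_fst (x : EuclideanSpace ℝ (Fin (m + 1))) : (eqvE m x).1 = x (Fin.last m) := rfl

lemma eqvE_snd (x : EuclideanSpace ℝ (Fin (m + 1))) (j : Fin m) :
    (eqvE m x).2 j = x j.castSucc := by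
  show x ((Fin.last m).succAbove j) = x j.castSucc
  rw [Fin.succAbove_last]

end MP

lemma eqvE_snd_eq (m : ℕ) (x : EuclideanSpace ℝ (Fin (m + 1))) :
    (EuclideanSpace.equiv (Fin m) ℝ).symm (eqvE m x).2 = initPart m x := by
  ext j
  exact eqvE_snd m x j

noncomputable def shearMap (m : ℕ) (ψ : EuclideanSpace ℝ (Fin m) → ℝ) :
    ℝ × (Fin m → ℝ) → ℝ × (Fin m → ℝ) :=
  fun p => (2 * ψ ((EuclideanSpace.equiv (Fin m) ℝ).symm p.2) - p.1, p.2)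

lemma shearMap_measurePreserving (m : ℕ) (ψ : EuclideanSpace ℝ (Fin m) → ℝ)
    (hψ : Continuous ψ) : MeasurePreserving (shearMap m ψ) volume volume := by
  have hψ' : Continuous fun y : Fin m → ℝ => ψ ((EuclideanSpace.equiv (Fin m) ℝ).symm y) :=
    hψ.comp (ContinuousLinearEquiv.continuous _)
  have h1 : MeasurePreserving (fun q : (Fin m → ℝ) × ℝ =>
      (q.1, 2 * ψ ((EuclideanSpace.equiv (Fin m) ℝ).symm q.1) - q.2)) volume volume := by
    refine MeasurePreserving.skew_product (μc := (volume : Measure ℝ))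
      (μd := (volume : Measure ℝ))
      (g := fun y t => 2 * ψ ((EuclideanSpace.equiv (Fin m) ℝ).symm y) - t)
      (MeasurePreserving.id (volume : Measure (Fin m → ℝ))) ?_
      (Filter.Eventually.of_forall fun y => ?_)
    · exact ((continuous_const.mul (hψ'.comp continuous_fst)).sub continuous_snd).measurable
    · exact (Measure.measurePreserving_sub_left volume _).map_eq
  have h2 : MeasurePreserving (Prod.swap : (Fin m → ℝ) × ℝ → ℝ × (Fin m → ℝ))
      volume volume := Measure.measurePreserving_swap (μ := volume) (ν := volume)
  have h3 : MeasurePreserving (Prod.swap : ℝ × (Fin m → ℝ) → (Fin m → ℝ) × ℝ)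
      volume volume := Measure.measurePreserving_swap (μ := volume) (ν := volume)
  exact (h2.comp h1).comp h3

lemma reflMap_eq_conj (m : ℕ) (ψ : EuclideanSpace ℝ (Fin m) → ℝ) :
    reflMap m ψ = (eqvE m).symm ∘ shearMap m ψ ∘ (eqvE m) := by
  funext x
  show reflMap m ψ x = (eqvE m).symm (shearMap m ψ (eqvE m x))
  have h2 : shearMap m ψ (eqvE m x)
      = (2 * ψ (initPart m x) - x (Fin.last m), (eqvE m x).2) := by
    simp only [shearMap, eqvE_snd_eq, eqvE_fst]
  rw [h2]
  have h3 : ((eqvE m).symm (2 * ψ (initPart m x) - x (Fin.last m), (eqvE m x).2)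
        : EuclideanSpace ℝ (Fin (m + 1)))
      = WithLp.toLp 2 (Fin.snoc ((EuclideanSpace.equiv (Fin m) ℝ).symm (eqvE m x).2).ofLp
          (2 * ψ (initPart m x) - x (Fin.last m)) : Fin (m + 1) → ℝ) := by
    show WithLp.toLp 2 (Fin.insertNth (Fin.last m) (2 * ψ (initPart m x) - x (Fin.last m))
        (eqvE m x).2 : ∀ _ : Fin (m + 1), ℝ) = _
    rw [Fin.insertNth_last']
    rfl
  rw [h3, eqvE_snd_eq]
  rfl

lemma reflMap_measurePreserving (m : ℕ) (ψ : EuclideanSpace ℝ (Fin m) → ℝ)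
    (hψ : Continuous ψ) : MeasurePreserving (reflMap m ψ) volume volume := by
  rw [reflMap_eq_conj]
  exact ((eqvE_measurePreserving m).symm _).comp
    ((shearMap_measurePreserving m ψ hψ).comp (eqvE_measurePreserving m))

lemma initPart_continuous (m : ℕ) : Continuous (initPart m) := by
  have h : Continuous fun (y : Fin (m + 1) → ℝ) (i : Fin m) => y i.castSucc :=
    continuous_pi fun i => continuous_apply _
  exact (EuclideanSpace.equiv (Fin m) ℝ).symm.continuous.comp
    (h.comp (EuclideanSpace.equiv (Fin (m + 1)) ℝ).continuous)

lemma last_continuous (m : ℕ) :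
    Continuous fun x : EuclideanSpace ℝ (Fin (m + 1)) => x (Fin.last m) :=
  (continuous_apply (Fin.last m)).comp (EuclideanSpace.equiv (Fin (m + 1)) ℝ).continuous

lemma graph_null (m : ℕ) (ψ : EuclideanSpace ℝ (Fin m) → ℝ) (hψ : Continuous ψ) :
    volume {x : EuclideanSpace ℝ (Fin (m + 1)) | x (Fin.last m) = ψ (initPart m x)} = 0 := by
  have hψ' : Continuous fun y : Fin m → ℝ => ψ ((EuclideanSpace.equiv (Fin m) ℝ).symm y) :=
    hψ.comp (ContinuousLinearEquiv.continuous _)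
  set Sg : Set (ℝ × (Fin m → ℝ)) :=
    {p | p.1 = ψ ((EuclideanSpace.equiv (Fin m) ℝ).symm p.2)} with hSgdef
  have hSgm : MeasurableSet Sg :=
    measurableSet_eq_fun measurable_fst (hψ'.measurable.comp measurable_snd)
  have hpre : {x : EuclideanSpace ℝ (Fin (m + 1)) | x (Fin.last m) = ψ (initPart m x)}
      = eqvE m ⁻¹' Sg := by
    ext x
    simp only [Set.mem_setOf_eq, Set.mem_preimage, hSgdef, eqvE_fst, eqvE_snd_eq]
  rw [hpre, (eqvE_measurePreserving m).measure_preimage hSgm.nullMeasurableSet]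
  -- now compute the product measure of the graph
  have hswap : (volume : Measure (ℝ × (Fin m → ℝ))) Sg
      = (volume : Measure ((Fin m → ℝ) × ℝ)) (Prod.swap ⁻¹' Sg) :=
    ((Measure.measurePreserving_swap (μ := (volume : Measure (Fin m → ℝ)))
      (ν := (volume : Measure ℝ))).measure_preimage hSgm.nullMeasurableSet).symm
  rw [hswap]
  have hset : (Prod.swap ⁻¹' Sg : Set ((Fin m → ℝ) × ℝ))
      = {q | q.2 = ψ ((EuclideanSpace.equiv (Fin m) ℝ).symm q.1)} := rfl
  rw [hset]
  have hm2 : MeasurableSet {q : (Fin m → ℝ) × ℝ |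
      q.2 = ψ ((EuclideanSpace.equiv (Fin m) ℝ).symm q.1)} :=
    measurableSet_eq_fun measurable_snd (hψ'.measurable.comp measurable_fst)
  rw [show (volume : Measure ((Fin m → ℝ) × ℝ))
      = (volume : Measure (Fin m → ℝ)).prod (volume : Measure ℝ) from rfl]
  rw [Measure.prod_apply hm2]
  have : ∀ y : Fin m → ℝ, (volume : Measure ℝ)
      (Prod.mk y ⁻¹' {q : (Fin m → ℝ) × ℝ |
        q.2 = ψ ((EuclideanSpace.equiv (Fin m) ℝ).symm q.1)}) = 0 := by
    intro y
    have : (Prod.mk y ⁻¹' {q : (Fin m → ℝ) × ℝ |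
        q.2 = ψ ((EuclideanSpace.equiv (Fin m) ℝ).symm q.1)})
        = {ψ ((EuclideanSpace.equiv (Fin m) ℝ).symm y)} := by
      ext t; simp [Set.mem_preimage]
    rw [this]
    exact Real.volume_singleton
  simp only [this, lintegral_zero]

theorem stmt3 (m : ℕ) (M : ℝ) (hM : 0 ≤ M) :
    ∃ C : ℝ, 0 < C ∧
      ∀ (ψ : EuclideanSpace ℝ (Fin m) → ℝ), ψ 0 = 0 →
        LipschitzWith (Real.toNNReal M) ψ →
      ∀ (r : ℝ), 0 < r →
      ∀ (u : EuclideanSpace ℝ (Fin (m + 1)) → ℝ),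
        IntegrableOn u (specialDomain m M ψ r) →
      ∀ (r' : ℝ), 0 < r' → r' < r / (3 * (M + 1)) →
        ⨍ x in Metric.ball (0 : EuclideanSpace ℝ (Fin (m + 1))) r',
            |reflExt m ψ u x|
          ≤ C * ⨍ x in Metric.ball (0 : EuclideanSpace ℝ (Fin (m + 1)))
              (3 * (M + 1) * r') ∩ specialDomain m M ψ r, |u x| := by
  classical
  have hK : (0:ℝ) < 2 * (3 * (M + 1)) ^ (m + 1) + 1 := by positivity
  refine ⟨2 * (3 * (M + 1)) ^ (m + 1) + 1, hK, ?_⟩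
  intro ψ hψ0 hψL r hr u hu r' hr'pos hr'r
  have hM1 : (0:ℝ) < M + 1 := by linarith
  have h3M : (1:ℝ) ≤ 3 * (M + 1) := by linarith
  have hψc : Continuous ψ := hψL.continuous
  have hrr : r' < r := lt_of_lt_of_le hr'r (div_le_self hr.le h3M)
  -- bound on ψ
  have hψb : ∀ y : EuclideanSpace ℝ (Fin m), |ψ y| ≤ M * ‖y‖ := by
    intro y
    have h := hψL.dist_le_mul y 0
    rw [hψ0] at h
    simpa [Real.dist_eq, dist_zero_right, Real.norm_eq_abs,
      Real.coe_toNNReal M hM] using h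
  set Ω : Set (EuclideanSpace ℝ (Fin (m + 1))) := specialDomain m M ψ r with hΩdef
  set B : Set (EuclideanSpace ℝ (Fin (m + 1))) := Metric.ball (0 : (EuclideanSpace ℝ (Fin (m + 1)))) r' with hBdef
  set T : Set (EuclideanSpace ℝ (Fin (m + 1))) := Metric.ball (0 : (EuclideanSpace ℝ (Fin (m + 1)))) (3 * (M + 1) * r') ∩ Ω with hTdef
  have hΩo : IsOpen Ω := by
    have h1 : IsOpen {x : (EuclideanSpace ℝ (Fin (m + 1))) | ‖initPart m x‖ < r} :=
      isOpen_lt (continuous_norm.comp (initPart_continuous m)) continuous_const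
    have h2 : IsOpen {x : (EuclideanSpace ℝ (Fin (m + 1))) | ψ (initPart m x) < x (Fin.last m)} :=
      isOpen_lt (hψc.comp (initPart_continuous m)) (last_continuous m)
    have h3 : IsOpen {x : (EuclideanSpace ℝ (Fin (m + 1))) | x (Fin.last m) < ψ (initPart m x) + (M + 1) * r} :=
      isOpen_lt (last_continuous m)
        ((hψc.comp (initPart_continuous m)).add continuous_const)
    exact (h1.inter (h2.inter h3) : _)
  have hΩm : MeasurableSet Ω := hΩo.measurableSet
  have hBm : MeasurableSet B := measurableSet_ball
  have hTm : MeasurableSet T := measurableSet_ball.inter hΩm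
  have hMP : MeasurePreserving (reflMap m ψ) volume volume :=
    reflMap_measurePreserving m ψ hψc
  -- geometric inclusions
  have hA : ∀ x : (EuclideanSpace ℝ (Fin (m + 1))), x ∈ B → ψ (initPart m x) < x (Fin.last m) → x ∈ T := by
    intro x hxB hx
    rw [hBdef, mem_ball_zero_iff] at hxB
    have h1 : ‖initPart m x‖ ≤ ‖x‖ := norm_initPart_le m x
    have h2 : |x (Fin.last m)| ≤ ‖x‖ := abs_last_le m x
    have h3 : |ψ (initPart m x)| ≤ M * ‖initPart m x‖ := hψb _
    have h4 : |ψ (initPart m x)| ≤ M * r' := by nlinarith [abs_nonneg (ψ (initPart m x))]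
    refine ⟨?_, ?_, hx, ?_⟩
    · rw [mem_ball_zero_iff]
      nlinarith
    · calc ‖initPart m x‖ ≤ ‖x‖ := h1
        _ < r' := hxB
        _ < r := hrr
    · have := abs_le.mp h2
      have := abs_le.mp h4
      nlinarith
  have hL : ∀ x : (EuclideanSpace ℝ (Fin (m + 1))), x ∈ B → x (Fin.last m) < ψ (initPart m x) →
      reflMap m ψ x ∈ T := by
    intro x hxB hx
    rw [hBdef, mem_ball_zero_iff] at hxB
    have h1 : ‖initPart m x‖ ≤ ‖x‖ := norm_initPart_le m x
    have h2 : |x (Fin.last m)| ≤ ‖x‖ := abs_last_le m x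
    have h3 : |ψ (initPart m x)| ≤ M * ‖initPart m x‖ := hψb _
    have h4 : |ψ (initPart m x)| ≤ M * r' := by nlinarith [abs_nonneg (ψ (initPart m x))]
    have h5 : ‖reflMap m ψ x‖ ≤ ‖initPart m x‖
        + |2 * ψ (initPart m x) - x (Fin.last m)| := norm_reflMap_le m ψ x
    have h6 : |2 * ψ (initPart m x) - x (Fin.last m)|
        ≤ 2 * |ψ (initPart m x)| + |x (Fin.last m)| := by
      calc |2 * ψ (initPart m x) - x (Fin.last m)|
          ≤ |2 * ψ (initPart m x)| + |x (Fin.last m)| := abs_sub _ _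
        _ = 2 * |ψ (initPart m x)| + |x (Fin.last m)| := by rw [abs_mul]; norm_num
    have hb1 := abs_le.mp h2
    have hb2 := abs_le.mp h4
    refine ⟨?_, ?_, ?_, ?_⟩
    · rw [mem_ball_zero_iff]
      nlinarith
    · rw [initPart_reflMap]
      calc ‖initPart m x‖ ≤ ‖x‖ := h1
        _ < r' := hxB
        _ < r := hrr
    · rw [initPart_reflMap, last_reflMap]
      linarith
    · rw [initPart_reflMap, last_reflMap]
      nlinarith
  -- measurable representative of u
  obtain ⟨g, hgsm, hug⟩ : ∃ g : (EuclideanSpace ℝ (Fin (m + 1))) → ℝ, StronglyMeasurable g ∧ u =ᵐ[volume.restrict Ω] g :=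
    ⟨hu.1.mk u, hu.1.stronglyMeasurable_mk, hu.1.ae_eq_mk⟩
  have hNnull : volume ({x : (EuclideanSpace ℝ (Fin (m + 1))) | u x ≠ g x} ∩ Ω) = 0 := by
    have h := hug
    rw [Filter.EventuallyEq, ae_iff, Measure.restrict_apply' hΩm] at h
    exact h
  set N : Set (EuclideanSpace ℝ (Fin (m + 1))) := toMeasurable volume ({x : (EuclideanSpace ℝ (Fin (m + 1))) | u x ≠ g x} ∩ Ω) with hNdef
  have hNm : MeasurableSet N := measurableSet_toMeasurable _ _
  have hN0 : volume N = 0 := by rw [hNdef, measure_toMeasurable]; exact hNnull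
  have hsubN : {x : (EuclideanSpace ℝ (Fin (m + 1))) | u x ≠ g x} ∩ Ω ⊆ N := subset_toMeasurable _ _
  have hG0 : volume {x : (EuclideanSpace ℝ (Fin (m + 1))) | x (Fin.last m) = ψ (initPart m x)} = 0 := graph_null m ψ hψc
  -- the reflected extensions agree a.e. on B
  have hae : reflExt m ψ u =ᵐ[volume.restrict B] reflExt m ψ g := by
    rw [Filter.EventuallyEq, ae_iff, Measure.restrict_apply' hBm]
    refine measure_mono_null (t := (N ∪ reflMap m ψ ⁻¹' N)
      ∪ {x : (EuclideanSpace ℝ (Fin (m + 1))) | x (Fin.last m) = ψ (initPart m x)}) ?_ ?_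
    · rintro x ⟨hxne, hxB⟩
      simp only [Set.mem_setOf_eq] at hxne
      by_cases hle : ψ (initPart m x) ≤ x (Fin.last m)
      · rcases lt_or_eq_of_le hle with hlt | heq
        · left; left
          apply hsubN
          refine ⟨?_, (hA x hxB hlt).2⟩
          simp only [reflExt, if_pos hle] at hxne
          exact hxne
        · right; exact heq.symm
      · have hlt := not_le.mp hle
        left; right
        show reflMap m ψ x ∈ N
        apply hsubN
        refine ⟨?_, (hL x hxB hlt).2⟩
        simp only [reflExt, if_neg hle] at hxne
        exact hxne
    · have hpre0 : volume (reflMap m ψ ⁻¹' N) = 0 := by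
        rw [hMP.measure_preimage hNm.nullMeasurableSet]; exact hN0
      exact measure_union_null (measure_union_null hN0 hpre0) hG0
  have hAGm : MeasurableSet {x : (EuclideanSpace ℝ (Fin (m + 1))) | ψ (initPart m x) ≤ x (Fin.last m)} :=
    measurableSet_le (hψc.comp (initPart_continuous m)).measurable
      (last_continuous m).measurable
  have hgem : StronglyMeasurable (reflExt m ψ g) :=
    StronglyMeasurable.ite hAGm hgsm (hgsm.comp_measurable hMP.measurable)
  set f : (EuclideanSpace ℝ (Fin (m + 1))) → ENNReal := fun x => (‖g x‖₊ : ENNReal) with hfdef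
  have hfm : Measurable f := hgsm.measurable.nnnorm.coe_nnreal_ennreal
  -- key lintegral estimate
  have key : ∫⁻ x in B, (‖reflExt m ψ g x‖₊ : ENNReal) ∂volume
      ≤ 2 * ∫⁻ x in T, f x ∂volume := by
    set AG := {x : (EuclideanSpace ℝ (Fin (m + 1))) | ψ (initPart m x) ≤ x (Fin.last m)} with hAGdef
    have hsplit : ∫⁻ x in B, (‖reflExt m ψ g x‖₊ : ENNReal) ∂volume
        = ∫⁻ x in AG ∩ B, (‖reflExt m ψ g x‖₊ : ENNReal) ∂volume
          + ∫⁻ x in AGᶜ ∩ B, (‖reflExt m ψ g x‖₊ : ENNReal) ∂volume := by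
      rw [← lintegral_add_compl (fun x => (‖reflExt m ψ g x‖₊ : ENNReal)) hAGm
        (μ := volume.restrict B), Measure.restrict_restrict hAGm,
        Measure.restrict_restrict hAGm.compl]
    have hup : ∫⁻ x in AG ∩ B, (‖reflExt m ψ g x‖₊ : ENNReal) ∂volume
        ≤ ∫⁻ x in T, f x ∂volume := by
      have he : ∫⁻ x in AG ∩ B, (‖reflExt m ψ g x‖₊ : ENNReal) ∂volume
          = ∫⁻ x in AG ∩ B, f x ∂volume := by
        apply setLIntegral_congr_fun (hAGm.inter hBm)
        refine fun x hx => ?_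
        have hrx : reflExt m ψ g x = g x := if_pos hx.1
        rw [hfdef]; simp only [hrx]
      rw [he]
      have hsub : AG ∩ B ⊆ T ∪ {x : (EuclideanSpace ℝ (Fin (m + 1))) | x (Fin.last m) = ψ (initPart m x)} := by
        rintro x ⟨hxAG, hxB⟩
        have hxAG' : ψ (initPart m x) ≤ x (Fin.last m) := hxAG
        rcases lt_or_eq_of_le hxAG' with hlt | heq
        · left; exact hA x hxB hlt
        · right; exact heq.symm
      calc ∫⁻ x in AG ∩ B, f x ∂volume
          ≤ ∫⁻ x in T ∪ {x : (EuclideanSpace ℝ (Fin (m + 1))) | x (Fin.last m) = ψ (initPart m x)}, f x ∂volume :=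
            lintegral_mono_set hsub
        _ ≤ ∫⁻ x in T, f x ∂volume
            + ∫⁻ x in {x : (EuclideanSpace ℝ (Fin (m + 1))) | x (Fin.last m) = ψ (initPart m x)}, f x ∂volume :=
            lintegral_union_le _ _ _
        _ = ∫⁻ x in T, f x ∂volume := by
            rw [setLIntegral_measure_zero _ _ hG0, add_zero]
    have hlo : ∫⁻ x in AGᶜ ∩ B, (‖reflExt m ψ g x‖₊ : ENNReal) ∂volume
        ≤ ∫⁻ x in T, f x ∂volume := by
      have he : ∫⁻ x in AGᶜ ∩ B, (‖reflExt m ψ g x‖₊ : ENNReal) ∂volume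
          = ∫⁻ x in AGᶜ ∩ B, f (reflMap m ψ x) ∂volume := by
        apply setLIntegral_congr_fun (hAGm.compl.inter hBm)
        refine fun x hx => ?_
        have hxlt : ¬ ψ (initPart m x) ≤ x (Fin.last m) := hx.1
        have hrx : reflExt m ψ g x = g (reflMap m ψ x) := if_neg hxlt
        rw [hfdef]; simp only [hrx]
      rw [he]
      have hsub : AGᶜ ∩ B ⊆ reflMap m ψ ⁻¹' T := by
        rintro x ⟨hx1, hxB⟩
        exact hL x hxB (not_le.mp hx1)
      calc ∫⁻ x in AGᶜ ∩ B, f (reflMap m ψ x) ∂volume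
          ≤ ∫⁻ x in reflMap m ψ ⁻¹' T, f (reflMap m ψ x) ∂volume :=
            lintegral_mono_set hsub
        _ = ∫⁻ x in T, f x ∂volume := hMP.setLIntegral_comp_preimage hTm hfm
    rw [hsplit, two_mul]
    exact add_le_add hup hlo
  -- finiteness and conversion to real integrals
  have hTsub : T ⊆ Ω := Set.inter_subset_right
  have huT : IntegrableOn u T := hu.mono_set hTsub
  have haeT : u =ᵐ[volume.restrict T] g := ae_restrict_of_ae_restrict_of_subset hTsub hug
  have hfT : ∫⁻ x in T, f x ∂volume = ∫⁻ x in T, (‖u x‖₊ : ENNReal) ∂volume := by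
    apply lintegral_congr_ae
    filter_upwards [haeT] with x hx
    rw [hfdef]; simp only [hx]
  have hTfin : ∫⁻ x in T, (‖u x‖₊ : ENNReal) ∂volume < ⊤ := huT.2
  have haen : (fun x => (‖reflExt m ψ u x‖₊ : ENNReal))
      =ᵐ[volume.restrict B] fun x => (‖reflExt m ψ g x‖₊ : ENNReal) := by
    filter_upwards [hae] with x hx
    rw [hx]
  have hBfin : ∫⁻ x in B, (‖reflExt m ψ u x‖₊ : ENNReal) ∂volume
      ≤ 2 * ∫⁻ x in T, (‖u x‖₊ : ENNReal) ∂volume := by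
    rw [lintegral_congr_ae haen, ← hfT]
    exact key
  have h2Tne : (2 * ∫⁻ x in T, (‖u x‖₊ : ENNReal) ∂volume) ≠ ⊤ :=
    ENNReal.mul_ne_top ENNReal.ofNat_ne_top hTfin.ne
  have hIntB : IntegrableOn (fun x => reflExt m ψ u x) B := by
    constructor
    · exact hgem.aestronglyMeasurable.congr hae.symm
    · show (∫⁻ x in B, (‖reflExt m ψ u x‖₊ : ENNReal) ∂volume) < ⊤
      exact lt_of_le_of_lt hBfin (lt_top_iff_ne_top.mpr h2Tne)
  have hIB : ∫ x in B, |reflExt m ψ u x| ∂volume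
      = (∫⁻ x in B, (‖reflExt m ψ u x‖₊ : ENNReal) ∂volume).toReal := by
    simp_rw [← Real.norm_eq_abs]
    exact integral_norm_eq_lintegral_enorm hIntB.1
  have hIT : ∫ x in T, |u x| ∂volume
      = (∫⁻ x in T, (‖u x‖₊ : ENNReal) ∂volume).toReal := by
    simp_rw [← Real.norm_eq_abs]
    exact integral_norm_eq_lintegral_enorm huT.1
  have hITnn : 0 ≤ ∫ x in T, |u x| ∂volume := integral_nonneg fun x => abs_nonneg _
  have hIBnn : 0 ≤ ∫ x in B, |reflExt m ψ u x| ∂volume :=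
    integral_nonneg fun x => abs_nonneg _
  have hint_le : ∫ x in B, |reflExt m ψ u x| ∂volume ≤ 2 * ∫ x in T, |u x| ∂volume := by
    rw [hIB, hIT]
    calc (∫⁻ x in B, (‖reflExt m ψ u x‖₊ : ENNReal) ∂volume).toReal
        ≤ (2 * ∫⁻ x in T, (‖u x‖₊ : ENNReal) ∂volume).toReal :=
          ENNReal.toReal_mono h2Tne hBfin
      _ = 2 * (∫⁻ x in T, (‖u x‖₊ : ENNReal) ∂volume).toReal := by
          rw [ENNReal.toReal_mul]; norm_num
  -- volume comparison
  have hvol : volume (Metric.ball (0 : (EuclideanSpace ℝ (Fin (m + 1)))) (3 * (M + 1) * r'))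
      = ENNReal.ofReal ((3 * (M + 1)) ^ (m + 1)) * volume B := by
    have h := Measure.addHaar_ball_mul (volume : Measure (EuclideanSpace ℝ (Fin (m + 1)))) (0 : (EuclideanSpace ℝ (Fin (m + 1))))
      (by positivity : (0:ℝ) ≤ 3 * (M + 1)) r'
    rwa [finrank_euclideanSpace_fin] at h
  have hapos : 0 < (volume B).toReal :=
    ENNReal.toReal_pos (Metric.measure_ball_pos volume 0 hr'pos).ne' measure_ball_lt_top.ne
  have hTne : volume T ≠ ⊤ :=
    ((measure_mono Set.inter_subset_left).trans_lt measure_ball_lt_top).ne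
  have hble : (volume T).toReal ≤ (3 * (M + 1)) ^ (m + 1) * (volume B).toReal := by
    have h1 : volume T ≤ volume (Metric.ball (0 : (EuclideanSpace ℝ (Fin (m + 1)))) (3 * (M + 1) * r')) :=
      measure_mono Set.inter_subset_left
    rw [hvol] at h1
    calc (volume T).toReal
        ≤ (ENNReal.ofReal ((3 * (M + 1)) ^ (m + 1)) * volume B).toReal :=
          ENNReal.toReal_mono
            (ENNReal.mul_ne_top ENNReal.ofReal_ne_top measure_ball_lt_top.ne) h1
      _ = (3 * (M + 1)) ^ (m + 1) * (volume B).toReal := by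
          rw [ENNReal.toReal_mul, ENNReal.toReal_ofReal (by positivity)]
  -- final average manipulation
  rw [setAverage_eq, setAverage_eq, smul_eq_mul, smul_eq_mul]
  by_cases hb0 : volume T = 0
  · have hrT : volume.restrict T = 0 := Measure.restrict_eq_zero.mpr hb0
    have hIT0 : ∫ x in T, |u x| ∂volume = 0 := by rw [hrT, integral_zero_measure]
    have hIB0 : ∫ x in B, |reflExt m ψ u x| ∂volume = 0 :=
      le_antisymm (by rw [hIT0] at hint_le; linarith) hIBnn
    rw [hIT0, hIB0]
    simp
  · have hbpos : 0 < (volume T).toReal := ENNReal.toReal_pos hb0 hTne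
    set a := (volume B).toReal
    set b := (volume T).toReal
    set IT := ∫ x in T, |u x| ∂volume
    set IB := ∫ x in B, |reflExt m ψ u x| ∂volume
    set K := (3 * (M + 1)) ^ (m + 1) with hKdef
    have hKnn : (0:ℝ) ≤ K := by rw [hKdef]; positivity
    have step1 : a⁻¹ * IB ≤ a⁻¹ * (2 * IT) :=
      mul_le_mul_of_nonneg_left hint_le (inv_nonneg.mpr hapos.le)
    have step2 : a⁻¹ * (2 * IT) ≤ (2 * K + 1) * (b⁻¹ * IT) := by
      have h2 : (2 * IT) / a ≤ ((2 * K + 1) * IT) / b := by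
        rw [div_le_div_iff₀ hapos hbpos]
        nlinarith [mul_le_mul_of_nonneg_left hble
          (by positivity : (0:ℝ) ≤ 2 * IT), mul_nonneg hITnn hapos.le]
      calc a⁻¹ * (2 * IT) = (2 * IT) / a := by ring
        _ ≤ ((2 * K + 1) * IT) / b := h2
        _ = (2 * K + 1) * (b⁻¹ * IT) := by ring
    show a⁻¹ * IB ≤ (2 * K + 1) * (b⁻¹ * IT)
    linarith
end

section
/- Define f : [0,2] → ℝ by f(x) = (2−x) e^{x−1} ( −e^{x+1}/(x+2) + ∫_{−1}^{1} e^{t² − x t} dt ). Then f is continuous on [0,2], f(0) > 1, and f(2) = 0; consequently there exists δ ∈ (0,2) with f(δ) = 1. -/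
open MeasureTheory Real

theorem stmt8 :
    ∀ f : ℝ → ℝ,
      f = (fun x => (2 - x) * Real.exp (x - 1) *
        (-Real.exp (x + 1) / (x + 2) + ∫ t in (-1 : ℝ)..1, Real.exp (t ^ 2 - x * t))) →
      ContinuousOn f (Set.Icc 0 2) ∧ 1 < f 0 ∧ f 2 = 0 ∧
        ∃ δ ∈ Set.Ioo (0 : ℝ) 2, f δ = 1 := by
  intro f hf
  -- continuity of the parametric integral
  have hg : Continuous fun x : ℝ => ∫ t in (-1 : ℝ)..1, Real.exp (t ^ 2 - x * t) :=
    intervalIntegral.continuous_parametric_intervalIntegral_of_continuous'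
      (by fun_prop) _ _
  have hcont : ContinuousOn f (Set.Icc 0 2) := by
    rw [hf]
    apply ContinuousOn.mul
    · exact ((continuous_const.sub continuous_id).mul
        (Real.continuous_exp.comp (continuous_id.sub continuous_const))).continuousOn
    · apply ContinuousOn.add
      · apply ContinuousOn.div
        · exact ((Real.continuous_exp.comp (continuous_id.add continuous_const)).neg).continuousOn
        · exact (continuous_id.add continuous_const).continuousOn
        · intro x hx; have := hx.1; dsimp; linarith
      · exact hg.continuousOn
  -- lower bound for the integral at x = 0
  have hbound : ∀ t : ℝ, 1 + t ^ 2 + t ^ 4 / 2 ≤ Real.exp (t ^ 2) := by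
    intro t
    have h := Real.sum_le_exp_of_nonneg (sq_nonneg t) 3
    simp [Finset.sum_range_succ, Nat.factorial] at h
    nlinarith [h]
  have hint1 : IntervalIntegrable (fun t : ℝ => 1 + t ^ 2 + t ^ 4 / 2) volume (-1) 1 :=
    (by fun_prop : Continuous fun t : ℝ => 1 + t ^ 2 + t ^ 4 / 2).intervalIntegrable _ _
  have hint2 : IntervalIntegrable (fun t : ℝ => Real.exp (t ^ 2)) volume (-1) 1 :=
    (by fun_prop : Continuous fun t : ℝ => Real.exp (t ^ 2)).intervalIntegrable _ _
  have hval : (∫ t in (-1 : ℝ)..1, (1 + t ^ 2 + t ^ 4 / 2)) = 43 / 15 := by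
    have hderiv : ∀ t ∈ Set.uIcc (-1 : ℝ) 1,
        HasDerivAt (fun t : ℝ => t + t ^ 3 / 3 + t ^ 5 / 10) (1 + t ^ 2 + t ^ 4 / 2) t := by
      intro t _
      have h1 : HasDerivAt (fun t : ℝ => t + t ^ 3 / 3 + t ^ 5 / 10)
          (1 + 3 * t ^ 2 / 3 + 5 * t ^ 4 / 10) t :=
        ((hasDerivAt_id t).add ((hasDerivAt_pow 3 t).div_const 3)).add
          ((hasDerivAt_pow 5 t).div_const 10)
      convert h1 using 1; ring
    rw [intervalIntegral.integral_eq_sub_of_hasDerivAt hderiv hint1]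
    norm_num
  have hI : (43 / 15 : ℝ) ≤ ∫ t in (-1 : ℝ)..1, Real.exp (t ^ 2) := by
    rw [← hval]
    exact intervalIntegral.integral_mono_on (by norm_num) hint1 hint2 fun t _ => hbound t
  have hf0 : 1 < f 0 := by
    rw [hf]
    have heq : (∫ t in (-1 : ℝ)..1, Real.exp (t ^ 2 - 0 * t))
        = ∫ t in (-1 : ℝ)..1, Real.exp (t ^ 2) := by
      congr 1; ext t; ring_nf
    simp only
    rw [heq]
    have hE : Real.exp 1 < 2.7182818286 := Real.exp_one_lt_d9
    have hpos : (0 : ℝ) < (Real.exp 1)⁻¹ := by positivity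
    have hmul : Real.exp 1 * (Real.exp 1)⁻¹ = 1 :=
      mul_inv_cancel₀ (Real.exp_pos 1).ne'
    have hexpneg : Real.exp ((0 : ℝ) - 1) = (Real.exp 1)⁻¹ := by
      rw [show ((0 : ℝ) - 1) = -1 by norm_num, Real.exp_neg]
    rw [show ((0 : ℝ) + 1) = 1 by norm_num, hexpneg]
    nlinarith [mul_lt_mul_of_pos_left
      (show Real.exp 1 < ∫ t in (-1 : ℝ)..1, Real.exp (t ^ 2) by linarith) hpos]
  have hf2 : f 2 = 0 := by rw [hf]; norm_num
  refine ⟨hcont, hf0, hf2, ?_⟩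
  have hmem : (1 : ℝ) ∈ Set.Ioo (f 2) (f 0) := by rw [hf2]; exact ⟨one_pos, hf0⟩
  have := intermediate_value_Ioo' (by norm_num : (0 : ℝ) ≤ 2) hcont hmem
  obtain ⟨δ, hδ, hδf⟩ := this
  exact ⟨δ, hδ, hδf⟩
end
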